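/- For a word w = w_1…w_n in S_n, a function f' : [n] → ℕ is called w-compatible if f'(w_1) ≥ f'(w_2) ≥ … ≥ f'(w_n) and f'(w_i) > f'(w_{i+1}) whenever w_i > w_{i+1}. Then every weakly decreasing-along-some-linear-order function arising from a (P,ω)-partition is w-compatible for exactly one linear extension w of (P,ω); that is, the set of (P,ω)-partitions is the disjoint union over w ∈ L(P,ω) of the sets S_w of functions f with f' w-compatible. -/

import Mathlib

open Finset Polynomial
open scoped Classical

/-- The set of linear extensions of a finite poset `P`, i.e. order-preserving
bijections `P ≃ Fin n`. -/
noncomputable def linExts (P : Type) [Fintype P] [PartialOrder P] (n : ℕ) :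
    Finset (P ≃ Fin n) :=
  Finset.univ.filter fun f => ∀ x y : P, x ≤ y → f x ≤ f y

/-- The word of a linear extension `f` with respect to the labeling `ω`. -/
def word {P : Type} {n : ℕ} (ω : P → ℕ) (f : P ≃ Fin n) : Fin n → ℕ :=
  fun i => ω (f.symm i)

/-- The major index of a word: the sum of the (1-indexed) descent positions. -/
def majW {n : ℕ} (w : Fin n → ℕ) : ℕ :=
  ∑ i : Fin n, if h : (i : ℕ) + 1 < n then
    (if w ⟨(i : ℕ) + 1, h⟩ < w i then (i : ℕ) + 1 else 0) else 0

/-- The number of inversions of a word. -/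
noncomputable def invW {n : ℕ} (w : Fin n → ℕ) : ℕ :=
  ((Finset.univ : Finset (Fin n × Fin n)).filter
    (fun p => p.1 < p.2 ∧ w p.2 < w p.1)).card

/-- Major index `q`-analogue of the number of linear extensions of `(P, ω)`. -/
noncomputable def eMaj (P : Type) [Fintype P] [PartialOrder P] (ω : P → ℕ) :
    Polynomial ℤ :=
  ∑ f ∈ linExts P (Fintype.card P), Polynomial.X ^ majW (word ω f)

/-- Inversion `q`-analogue of the number of linear extensions of `(P, ω)`. -/
noncomputable def eInv (P : Type) [Fintype P] [PartialOrder P] (ω : P → ℕ) :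
    Polynomial ℤ :=
  ∑ f ∈ linExts P (Fintype.card P), Polynomial.X ^ invW (word ω f)

/-- Major index `q`-analogue of linear extensions whose last letter is the label
of an element of `S`. -/
noncomputable def eMajEndIn (P : Type) [Fintype P] [PartialOrder P]
    (ω : P → ℕ) (S : Set P) : Polynomial ℤ :=
  ∑ f ∈ (linExts P (Fintype.card P)).filter (fun f => ∃ s ∈ S, ∀ x, f x ≤ f s),
    Polynomial.X ^ majW (word ω f)

/-- The Gaussian binomial coefficient `[n choose k]_q`, defined by the
`q`-Pascal recurrence. -/
noncomputable def qBinom : ℕ → ℕ → Polynomial ℤ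
  | _, 0 => 1
  | 0, _ + 1 => 0
  | n + 1, k + 1 => qBinom n k + Polynomial.X ^ (k + 1) * qBinom n (k + 1)

/-- `(P,ω)`-partition. -/
def IsPPart {α : Type} [PartialOrder α] (ω : α → ℕ) (f : α → ℕ) : Prop :=
  ∀ s t : α, s ≤ t → f t ≤ f s ∧ (ω t < ω s → f t < f s)

/-- `(P,ω;s)`-partition. -/
def IsPPartS {α : Type} [PartialOrder α] (ω : α → ℕ) (s : α) (f : α → ℕ) : Prop :=
  IsPPart ω f ∧ (∀ t, f s ≤ f t) ∧ ∀ t, t ≠ s → f s = f t → ω t < ω s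

/-- Generating function by size for the maps `α → ℕ` satisfying `pred`. -/
noncomputable def GPart (α : Type) [Fintype α] (pred : (α → ℕ) → Prop) :
    PowerSeries ℚ :=
  PowerSeries.mk fun m => (Set.ncard {f : α → ℕ | pred f ∧ ∑ t, f t = m} : ℚ)

/-- `f'` is `w`-compatible: `f'(w_1) ≥ f'(w_2) ≥ ⋯ ≥ f'(w_n)` with strict
inequality `f'(w_i) > f'(w_{i+1})` whenever `w_i > w_{i+1}`. -/
def WCompatible {n : ℕ} (f' : Fin n → ℕ) (w : Equiv.Perm (Fin n)) : Prop :=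
  ∀ (i : ℕ) (h : i + 1 < n),
    f' (w ⟨i + 1, h⟩) ≤ f' (w ⟨i, by omega⟩) ∧
      (w ⟨i + 1, h⟩ < w ⟨i, by omega⟩ → f' (w ⟨i + 1, h⟩) < f' (w ⟨i, by omega⟩))

/-- The fundamental lemma of `(P,ω)`-partitions: `f` is a `(P,ω)`-partition if
and only if `f'` is `w`-compatible for exactly one linear extension
`w = ω ∘ g⁻¹` of the labeled poset `(P,ω)`. -/

private lemma consec_strictMono {n : ℕ} {β : Type*} [Preorder β] {F : Fin n → β}
    (h : ∀ (i : ℕ) (hi : i + 1 < n), F ⟨i, by omega⟩ < F ⟨i + 1, hi⟩) :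
    StrictMono F := by
  have key : ∀ d : ℕ, ∀ i : ℕ, ∀ hi : i + d < n, 0 < d →
      F ⟨i, by omega⟩ < F ⟨i + d, hi⟩ := by
    intro d
    induction d with
    | zero => intro i hi h0; omega
    | succ d ih =>
      intro i hi _
      rcases Nat.eq_zero_or_pos d with h0 | h0
      · subst h0; exact h i hi
      · have h1 := ih i (by omega) h0
        have h2 := h (i + d) (by omega)
        have h3 : F ⟨i + d + 1, by omega⟩ = F ⟨i + (d + 1), hi⟩ := by
          congr 1
        exact h1.trans (h3 ▸ h2)
  intro a b hab
  have hab' : (a : ℕ) < b := hab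
  have := key ((b : ℕ) - a) a (by omega) (by omega)
  have e1 : (⟨(a : ℕ), by omega⟩ : Fin n) = a := rfl
  have e2 : (⟨(a : ℕ) + ((b : ℕ) - a), by omega⟩ : Fin n) = b := by
    apply Fin.ext; simp; omega
  rw [e1, e2] at this
  exact this

private lemma exists_unique_sorting {α β : Type*} [Fintype α] [LinearOrder β] {n : ℕ}
    (hn : Fintype.card α = n) {e : α → β} (he : Function.Injective e) :
    ∃! g : α ≃ Fin n, ∀ x y : α, e x < e y ↔ g x < g y := by
  letI : LinearOrder α := LinearOrder.lift' e he
  have hlt : ∀ x y : α, x < y ↔ e x < e y := by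
    intro x y
    rw [lt_iff_le_not_ge, lt_iff_le_not_ge]
    exact Iff.rfl
  set g0 : α ≃o Fin n := (monoEquivOfFin α hn).symm with hg0
  refine ⟨g0.toEquiv, ?_, ?_⟩
  · intro x y
    rw [← hlt]
    exact (g0.lt_iff_lt).symm
  · intro g' hg'
    have hF : StrictMono (fun i => g0 (g'.symm i) : Fin n → Fin n) := by
      intro i j hij
      have : e (g'.symm i) < e (g'.symm j) := by
        rw [hg']
        simpa using hij
      rw [← hlt] at this
      exact g0.lt_iff_lt.mpr this
    have hrange : Set.range (fun i => g0 (g'.symm i) : Fin n → Fin n) = Set.range (id : Fin n → Fin n) := by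
      simp only [Set.range_id]
      exact Set.range_eq_univ.mpr fun j => ⟨g' (g0.symm j), by simp⟩
    have hid := (hF.range_inj strictMono_id).mp hrange
    apply Equiv.ext; intro x
    have := congrFun hid (g' x)
    simpa using this.symm

theorem pPartition_iff_unique_compatible_linExt (P : Type) [Fintype P]
    [PartialOrder P] (n : ℕ) (hn : Fintype.card P = n) (ω : P ≃ Fin n)
    (f : P → ℕ) :
    IsPPart (fun x => (ω x : ℕ)) f ↔
      ∃! w : Equiv.Perm (Fin n),
        (∃ g ∈ linExts P n, w = g.symm.trans ω) ∧
          WCompatible (fun i => f (ω.symm i)) w := by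
  classical
  set e : P → Lex (ℕᵒᵈ × ℕ) := fun x => toLex (OrderDual.toDual (f x), (ω x : ℕ)) with he_def
  have he : Function.Injective e := by
    intro x y hxy
    have h2 : ((ω x : ℕ)) = (ω y : ℕ) := congrArg (fun p => (ofLex p).2) hxy
    exact ω.injective (Fin.ext h2)
  have elt : ∀ x y : P, e x < e y ↔ (f y < f x ∨ (f x = f y ∧ (ω x : ℕ) < (ω y : ℕ))) := by
    intro x y
    rw [he_def]
    rw [Prod.Lex.lt_iff]
    simp only [ofLex_toLex, OrderDual.toDual_lt_toDual, OrderDual.toDual_inj]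
  have cond : ∀ x y : P, x ≠ y →
      ((f y ≤ f x ∧ ((ω y : ℕ) < (ω x : ℕ) → f y < f x)) ↔ e x < e y) := by
    intro x y hxy
    have hω : (ω x : ℕ) ≠ (ω y : ℕ) := fun h => hxy (ω.injective (Fin.ext h))
    rw [elt]
    constructor
    · rintro ⟨h1, h2⟩
      rcases lt_or_eq_of_le h1 with h | h
      · exact Or.inl h
      · refine Or.inr ⟨h.symm, ?_⟩
        by_contra hlt
        have hyx : (ω y : ℕ) < (ω x : ℕ) := by omega
        exact absurd (h2 hyx) (by omega)
    · rintro (h | ⟨h1, h2⟩)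
      · exact ⟨le_of_lt h, fun _ => h⟩
      · exact ⟨le_of_eq h1.symm, fun hlt => absurd h2 (by omega)⟩
  have compat_iff : ∀ g : P ≃ Fin n,
      WCompatible (fun i => f (ω.symm i)) (g.symm.trans ω) ↔
        ∀ (i : ℕ) (hi : i + 1 < n),
          e (g.symm ⟨i, by omega⟩) < e (g.symm ⟨i + 1, hi⟩) := by
    intro g
    unfold WCompatible
    refine forall_congr' fun i => forall_congr' fun hi => ?_
    have hxy : g.symm ⟨i, by omega⟩ ≠ g.symm ⟨i + 1, hi⟩ := by
      intro h
      have := g.symm.injective h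
      simp only [Fin.mk.injEq] at this
      omega
    rw [← cond _ _ hxy]
    simp only [Equiv.trans_apply, Equiv.symm_apply_apply, Fin.lt_def]
  constructor
  · intro hf
    obtain ⟨g, hg, hguniq⟩ := exists_unique_sorting hn he
    have hmem : g ∈ linExts P n := by
      simp only [linExts, Finset.mem_filter, Finset.mem_univ, true_and]
      intro x y hxy
      rcases eq_or_ne x y with rfl | hne
      · exact le_rfl
      · have h := hf x y hxy
        have hexy : e x < e y := (cond x y hne).mp h
        exact le_of_lt ((hg x y).mp hexy)
    refine ⟨g.symm.trans ω, ⟨⟨g, hmem, rfl⟩, ?_⟩, ?_⟩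
    · rw [compat_iff]
      intro i hi
      exact (hg _ _).mpr (by simp [Fin.lt_def])
    · rintro w' ⟨⟨g', hg'mem, rfl⟩, hcomp'⟩
      have hsm : StrictMono (fun j : Fin n => e (g'.symm j)) :=
        consec_strictMono ((compat_iff g').mp hcomp')
      have hchar : ∀ x y : P, e x < e y ↔ g' x < g' y := by
        intro x y
        constructor
        · intro hexy
          by_contra hnot
          rcases lt_or_eq_of_le (le_of_not_gt hnot) with h | h
          · have h2 := hsm h
            simp only [Equiv.symm_apply_apply] at h2
            exact absurd hexy (lt_asymm h2)
          · have : y = x := g'.injective h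
            subst this
            exact absurd hexy (lt_irrefl _)
        · intro h
          have h2 := hsm h
          simpa using h2
      rw [hguniq g' hchar]
  · rintro ⟨w, ⟨⟨g, hgmem, rfl⟩, hcomp⟩, -⟩
    have hsm : StrictMono (fun j : Fin n => e (g.symm j)) :=
      consec_strictMono ((compat_iff g).mp hcomp)
    have hmono : ∀ x y : P, x ≤ y → g x ≤ g y := by
      simp only [linExts, Finset.mem_filter, Finset.mem_univ, true_and] at hgmem
      exact hgmem
    intro s t hst
    rcases eq_or_ne s t with rfl | hne
    · exact ⟨le_rfl, fun h => absurd h (lt_irrefl _)⟩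
    · have hlt : g s < g t := lt_of_le_of_ne (hmono s t hst) (fun h => hne (g.injective h))
      have hest : e s < e t := by simpa using hsm hlt
      rw [elt] at hest
      rcases hest with h | ⟨h1, h2⟩
      · exact ⟨le_of_lt h, fun _ => h⟩
      · exact ⟨le_of_eq h1.symm, fun hlt2 => absurd h2 (not_lt.mpr hlt2.le)⟩
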